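/- Fix ℓ ∈ (0, 1) and τ ∈ (0, π/2). Then the functions γ and θ are differentiable at τ with derivatives γ′(τ) = √(1 − ℓ²)/√(1 + ℓ²·tan²τ) and θ′(τ) = ℓ·sec²τ/(1 + ℓ²·tan²τ); moreover θ′(τ) = ℓ/cos²(γ(τ)), so cos²(γ(τ))·θ′(τ) = ℓ is conserved along the curve. -/

import Mathlib

open Real

/-- Tortoise coordinate `γ(τ)` along the null geodesic of angular momentum `ℓ`:
`γ(τ) = arctan(√(1−ℓ²)·tan τ / √(1+ℓ²·tan²τ))` for `τ ∈ [0, π/2)`, with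
`γ(π/2) = arctan(√(1−ℓ²)/ℓ)` if `ℓ > 0` and `π/2` if `ℓ = 0`, and
`γ(τ) = γ(π − τ)` for `τ ∈ (π/2, π]`. -/
noncomputable def tortoiseGamma (l τ : ℝ) : ℝ :=
  if τ < π / 2 then
    Real.arctan (Real.sqrt (1 - l ^ 2) * Real.tan τ /
      Real.sqrt (1 + l ^ 2 * Real.tan τ ^ 2))
  else if τ = π / 2 then
    (if 0 < l then Real.arctan (Real.sqrt (1 - l ^ 2) / l) else π / 2)
  else
    Real.arctan (Real.sqrt (1 - l ^ 2) * Real.tan (π - τ) /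
      Real.sqrt (1 + l ^ 2 * Real.tan (π - τ) ^ 2))

/-- Boundary angle `θ(τ)` along the null geodesic of angular momentum `ℓ`:
`θ(τ) = arctan(ℓ·tan τ)` for `τ ∈ [0, π/2)`, `θ(π/2) = π/2`, and
`θ(τ) = π − θ(π − τ)` for `τ ∈ (π/2, π]`. -/
noncomputable def boundaryTheta (l τ : ℝ) : ℝ :=
  if τ < π / 2 then Real.arctan (l * Real.tan τ)
  else if τ = π / 2 then π / 2
  else π - Real.arctan (l * Real.tan (π - τ))

/-- For `ℓ ∈ (0,1)` and `τ ∈ (0, π/2)`, `γ` and `θ` are differentiable at `τ` with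
`γ′(τ) = √(1−ℓ²)/√(1+ℓ²·tan²τ)` and `θ′(τ) = ℓ·sec²τ/(1+ℓ²·tan²τ)`; moreover
`θ′(τ) = ℓ/cos²(γ(τ))`, so `cos²(γ(τ))·θ′(τ) = ℓ` is conserved. -/
theorem null_geodesic_derivatives (l τ : ℝ) (hl : l ∈ Set.Ioo (0 : ℝ) 1)
    (hτ : τ ∈ Set.Ioo 0 (π / 2)) :
    HasDerivAt (tortoiseGamma l)
        (Real.sqrt (1 - l ^ 2) / Real.sqrt (1 + l ^ 2 * Real.tan τ ^ 2)) τ ∧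
    HasDerivAt (boundaryTheta l)
        (l * (1 / Real.cos τ ^ 2) / (1 + l ^ 2 * Real.tan τ ^ 2)) τ ∧
    l * (1 / Real.cos τ ^ 2) / (1 + l ^ 2 * Real.tan τ ^ 2)
        = l / Real.cos (tortoiseGamma l τ) ^ 2 ∧
    Real.cos (tortoiseGamma l τ) ^ 2 *
        (l * (1 / Real.cos τ ^ 2) / (1 + l ^ 2 * Real.tan τ ^ 2)) = l := by
  obtain ⟨hl0, hl1⟩ := hl
  obtain ⟨hτ0, hτ2⟩ := hτ
  have hπ : 0 < π := Real.pi_pos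
  have hc : 0 < Real.cos τ := Real.cos_pos_of_mem_Ioo ⟨by linarith, hτ2⟩
  have hcne : Real.cos τ ≠ 0 := hc.ne'
  set T := Real.tan τ with hT
  set L := Real.sqrt (1 - l ^ 2) with hLdef
  have hl2 : (0:ℝ) ≤ 1 - l ^ 2 := by nlinarith
  have hL2 : L ^ 2 = 1 - l ^ 2 := Real.sq_sqrt hl2
  set D := 1 + l ^ 2 * T ^ 2 with hDdef
  have hD : 0 < D := by positivity
  have hsD : 0 < Real.sqrt D := Real.sqrt_pos.mpr hD
  have hsD2 : Real.sqrt D ^ 2 = D := Real.sq_sqrt hD.le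
  have hsec : 1 / Real.cos τ ^ 2 = 1 + T ^ 2 := by
    rw [hT, ← Real.inv_one_add_tan_sq hcne]
    field_simp
  -- derivatives
  have htan : HasDerivAt Real.tan (1 / Real.cos τ ^ 2) τ := Real.hasDerivAt_tan hcne
  have hinner : HasDerivAt (fun x => 1 + l ^ 2 * Real.tan x ^ 2)
      (l ^ 2 * (2 * T * (1 / Real.cos τ ^ 2))) τ := by
    have := ((htan.pow 2).const_mul (l ^ 2)).const_add 1
    refine this.congr_deriv ?_
    push_cast
    ring
  have hDne : (1 : ℝ) + l ^ 2 * Real.tan τ ^ 2 ≠ 0 := hD.ne'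
  have hsqrt : HasDerivAt (fun x => Real.sqrt (1 + l ^ 2 * Real.tan x ^ 2))
      (l ^ 2 * (2 * T * (1 / Real.cos τ ^ 2)) / (2 * Real.sqrt D)) τ :=
    hinner.sqrt hDne
  have hnum : HasDerivAt (fun x => L * Real.tan x) (L * (1 / Real.cos τ ^ 2)) τ :=
    htan.const_mul L
  have hdiv : HasDerivAt
      (fun x => L * Real.tan x / Real.sqrt (1 + l ^ 2 * Real.tan x ^ 2))
      ((L * (1 / Real.cos τ ^ 2) * Real.sqrt D -
        L * T * (l ^ 2 * (2 * T * (1 / Real.cos τ ^ 2)) / (2 * Real.sqrt D))) /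
        Real.sqrt D ^ 2) τ :=
    hnum.div hsqrt hsD.ne'
  have harc := hdiv.arctan
  -- the key algebraic identity: 1 + (L T / √D)^2 = (1 + T^2)/D
  have hone : 1 + (L * T / Real.sqrt D) ^ 2 = (1 + T ^ 2) / D := by
    rw [div_pow, mul_pow, hL2, hsD2, hDdef]
    field_simp
    ring
  have hmul : Real.sqrt D * Real.sqrt D = D := Real.mul_self_sqrt hD.le
  have h1T : (0:ℝ) < 1 + T ^ 2 := by positivity
  have hder : 1 / (1 + (L * T / Real.sqrt D) ^ 2) *
      ((L * (1 / Real.cos τ ^ 2) * Real.sqrt D -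
        L * T * (l ^ 2 * (2 * T * (1 / Real.cos τ ^ 2)) / (2 * Real.sqrt D))) /
        Real.sqrt D ^ 2) = L / Real.sqrt D := by
    rw [hone, hsec, hsD2]
    field_simp
    linear_combination L * hsD2 + L * hDdef
  have hevγ : tortoiseGamma l =ᶠ[nhds τ]
      fun x => Real.arctan (L * Real.tan x / Real.sqrt (1 + l ^ 2 * Real.tan x ^ 2)) := by
    filter_upwards [isOpen_Iio.eventually_mem (Set.mem_Iio.mpr hτ2)] with x hx
    rw [tortoiseGamma, if_pos (Set.mem_Iio.mp hx)]
  have hγ : HasDerivAt (tortoiseGamma l) (L / Real.sqrt D) τ := by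
    rw [← hder]
    exact harc.congr_of_eventuallyEq hevγ
  -- θ derivative
  have hθarc := (htan.const_mul l).arctan
  have hevθ : boundaryTheta l =ᶠ[nhds τ] fun x => Real.arctan (l * Real.tan x) := by
    filter_upwards [isOpen_Iio.eventually_mem (Set.mem_Iio.mpr hτ2)] with x hx
    rw [boundaryTheta, if_pos (Set.mem_Iio.mp hx)]
  have hθ : HasDerivAt (boundaryTheta l) (l * (1 / Real.cos τ ^ 2) / D) τ := by
    have h := hθarc.congr_of_eventuallyEq hevθ
    refine h.congr_deriv ?_
    rw [hDdef, mul_pow]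
    ring
  -- tortoiseGamma value
  have hγval : tortoiseGamma l τ = Real.arctan (L * T / Real.sqrt D) := by
    rw [tortoiseGamma, if_pos hτ2]
  have hcosγ : Real.cos (tortoiseGamma l τ) ^ 2 = D / (1 + T ^ 2) := by
    rw [hγval, Real.cos_sq_arctan, hone]
    rw [one_div_div]
  have h1T : (0:ℝ) < 1 + T ^ 2 := by positivity
  have heq : l * (1 / Real.cos τ ^ 2) / D = l / Real.cos (tortoiseGamma l τ) ^ 2 := by
    rw [hcosγ, hsec]
    field_simp
  refine ⟨hγ, hθ, heq, ?_⟩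
  rw [heq, hcosγ]
  field_simp
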